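/- Let E and F be real Banach spaces and j : E → F a linear isometric embedding. Then the following are equivalent: (i) there exists a group homomorphism Θ from the group of all surjective (not necessarily linear) isometries of E to the group of all surjective isometries of F, continuous for the topologies of pointwise convergence, such that (Θφ)(j(a)) = j(φ(a)) for all isometries φ and all a ∈ E; (ii) there exists a group homomorphism Θ' from the group of surjective linear isometries of E to the group of surjective linear isometries of F, continuous for the topologies of pointwise convergence, such that (Θ'φ)(j(a)) = j(φ(a)) for all surjective linear isometries φ of E and all a ∈ E. -/

import Mathlib

/-- The topology of pointwise convergence on the group of surjective isometries of a
metric space. -/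
def isoPtTop (X : Type*) [MetricSpace X] : TopologicalSpace (X ≃ᵢ X) :=
  TopologicalSpace.induced (fun φ : X ≃ᵢ X => (φ : X → X)) inferInstance

/-- The topology of pointwise convergence on the group of surjective linear isometries of
a normed space. -/
def linIsoPtTop (E : Type*) [NormedAddCommGroup E] [NormedSpace ℝ E] :
    TopologicalSpace (E ≃ₗᵢ[ℝ] E) :=
  TopologicalSpace.induced (fun φ : E ≃ₗᵢ[ℝ] E => (φ : E → E)) inferInstance

/-- For a linear isometric embedding `j : E → F` of real Banach spaces, being a
`g`-embedding for the full isometry groups is equivalent to the analogous condition for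
the linear isometry groups: a continuous group homomorphism `Θ : Iso(E) → Iso(F)` with
`Θ φ` extending `φ` (along `j`) exists iff a continuous group homomorphism
`Θ' : Iso_L(E) → Iso_L(F)` with `Θ' φ` extending `φ` exists. -/
theorem gEmbedding_iff_linear_gEmbedding (E F : Type*)
    [NormedAddCommGroup E] [NormedSpace ℝ E] [CompleteSpace E]
    [NormedAddCommGroup F] [NormedSpace ℝ F] [CompleteSpace F]
    (j : E →ₗᵢ[ℝ] F) :
    (∃ Θ : (E ≃ᵢ E) → (F ≃ᵢ F),
      (∀ φ ψ : E ≃ᵢ E, Θ (φ * ψ) = Θ φ * Θ ψ) ∧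
      @Continuous _ _ (isoPtTop E) (isoPtTop F) Θ ∧
      ∀ (φ : E ≃ᵢ E) (a : E), Θ φ (j a) = j (φ a)) ↔
    (∃ Θ' : (E ≃ₗᵢ[ℝ] E) → (F ≃ₗᵢ[ℝ] F),
      (∀ φ ψ : E ≃ₗᵢ[ℝ] E, Θ' (φ * ψ) = Θ' φ * Θ' ψ) ∧
      @Continuous _ _ (linIsoPtTop E) (linIsoPtTop F) Θ' ∧
      ∀ (φ : E ≃ₗᵢ[ℝ] E) (a : E), Θ' φ (j a) = j (φ a)) := by
  letI tIE : TopologicalSpace (E ≃ᵢ E) := isoPtTop E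
  letI tIF : TopologicalSpace (F ≃ᵢ F) := isoPtTop F
  letI tLE : TopologicalSpace (E ≃ₗᵢ[ℝ] E) := linIsoPtTop E
  letI tLF : TopologicalSpace (F ≃ₗᵢ[ℝ] F) := linIsoPtTop F
  have hindE : tIE = TopologicalSpace.induced (fun φ : E ≃ᵢ E => (φ : E → E)) inferInstance := rfl
  constructor
  · rintro ⟨Θ, hmul, hcont, hext⟩
    have h0 : ∀ φ : E ≃ₗᵢ[ℝ] E, Θ φ.toIsometryEquiv 0 = 0 := by
      intro φ
      have := hext φ.toIsometryEquiv 0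
      simpa using this
    refine ⟨fun φ => (Θ φ.toIsometryEquiv).toRealLinearIsometryEquivOfMapZero (h0 φ),
      ?_, ?_, ?_⟩
    · intro φ ψ
      ext x
      have h1 : (φ * ψ).toIsometryEquiv = φ.toIsometryEquiv * ψ.toIsometryEquiv := by
        ext y; rfl
      simp [IsometryEquiv.coe_toRealLinearIsometryEquivOfMapZero, h1, hmul,
        LinearIsometryEquiv.coe_mul, IsometryEquiv.mul_apply]
    · apply continuous_induced_rng.2
      have key : (fun φ : E ≃ₗᵢ[ℝ] E =>
          (((Θ φ.toIsometryEquiv).toRealLinearIsometryEquivOfMapZero (h0 φ)) : F → F)) =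
          (fun ψ : E ≃ᵢ E => (Θ ψ : F → F)) ∘ (fun φ : E ≃ₗᵢ[ℝ] E => φ.toIsometryEquiv) := by
        funext φ
        simp [IsometryEquiv.coe_toRealLinearIsometryEquivOfMapZero]
      simp only [Function.comp_def]
      rw [key]
      refine (continuous_induced_dom.comp hcont).comp ?_
      apply continuous_induced_rng.2
      exact continuous_induced_dom
    · intro φ a
      simp [IsometryEquiv.coe_toRealLinearIsometryEquivOfMapZero, hext]
  · rintro ⟨Θ', hmul, hcont, hext⟩
    set L : (E ≃ᵢ E) → (E ≃ₗᵢ[ℝ] E) := fun φ => φ.toRealLinearIsometryEquiv with hLdef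
    have hL : ∀ (φ : E ≃ᵢ E) (x : E), L φ x = φ x - φ 0 := fun φ x =>
      IsometryEquiv.toRealLinearIsometryEquiv_apply φ x
    refine ⟨fun φ => ((Θ' (L φ)).toIsometryEquiv).trans (IsometryEquiv.addRight (j (φ 0))),
      ?_, ?_, ?_⟩
    · intro φ ψ
      ext x
      have hφ : ∀ u : E, φ u = L φ u + φ 0 := fun u => by rw [hL]; abel
      have h1 : L (φ * ψ) = L φ * L ψ := by
        ext y
        simp only [LinearIsometryEquiv.coe_mul, Function.comp_apply, hL,
          IsometryEquiv.mul_apply]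
        rw [hφ (ψ y), hφ (ψ 0), hφ (ψ y - ψ 0), map_sub]
        abel
      simp only [IsometryEquiv.mul_apply, IsometryEquiv.trans_apply,
        LinearIsometryEquiv.coe_toIsometryEquiv, IsometryEquiv.addRight_apply, h1, hmul,
        LinearIsometryEquiv.coe_mul, Function.comp_apply]
      rw [map_add (Θ' (L φ)), hext (L φ) (ψ 0), add_assoc, ← j.map_add]
      congr 2
      rw [hφ (ψ 0)]
    · apply continuous_induced_rng.2
      apply continuous_pi
      intro x
      have ev0 : Continuous (fun φ : E ≃ᵢ E => φ 0) :=
        (continuous_apply (0 : E)).comp continuous_induced_dom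
      have hLcont : Continuous L := by
        apply continuous_induced_rng.2
        apply continuous_pi
        intro y
        have : (fun φ : E ≃ᵢ E => (L φ : E → E) y) = fun φ : E ≃ᵢ E => φ y - φ 0 := by
          funext φ; exact hL φ y
        simp only [Function.comp_def]
        rw [this]
        exact (((continuous_apply y).comp continuous_induced_dom :
          Continuous (fun φ : E ≃ᵢ E => φ y))).sub ev0
      have h1 : Continuous (fun φ : E ≃ᵢ E => (Θ' (L φ)) x) :=
        ((continuous_apply x).comp (continuous_induced_dom.comp hcont)).comp hLcont
      exact h1.add (j.continuous.comp ev0)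
    · intro φ a
      simp only [IsometryEquiv.trans_apply, LinearIsometryEquiv.coe_toIsometryEquiv,
        IsometryEquiv.addRight_apply]
      rw [hext (L φ) a, ← j.map_add, hL]
      congr 1
      abel
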